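/- Let (F,σ) be a difference field with constant field K = const(F,σ), and suppose there exists a K-embedding τ : F → Seq(K), i.e., an injective difference ring homomorphism into the ring of K-sequences modulo eventual equality (with the shift automorphism), sending each c ∈ K to the constant sequence. Then (F,σ) is constant-stable. -/
import Mathlib


/-- If a difference field `(F,σ)` with constant field `K` admits a `K`-embedding into the
ring of sequences `Seq(K)` (germs at infinity with the shift), then `(F,σ)` is
constant-stable. -/
theorem stmt_6 (F K : Type*) [Field F] [CharZero F] [Field K] (σ : F ≃+* F)
    (ι : K →+* F)
    (hιc : ∀ c : K, σ (ι c) = ι c)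
    (hconst : ∀ f : F, σ f = f → ∃ c : K, f = ι c)
    (τ : F →+* Filter.Germ (Filter.atTop : Filter ℕ) K)
    (hinj : Function.Injective τ)
    (hshift : ∀ f : F, τ (σ f) = (τ f).compTendsto (fun n => n + 1)
        (Filter.tendsto_add_atTop_nat 1))
    (hconstmap : ∀ c : K, τ (ι c) = (↑(fun _ : ℕ => c) : Filter.Germ (Filter.atTop : Filter ℕ) K)) :
    ∀ k : ℕ, 1 ≤ k → ∀ f : F, (⇑σ)^[k] f = f → σ f = f := by
  intro k hk f hf
  classical
  set h : ℕ → Polynomial F := fun i => Polynomial.X - Polynomial.C ((⇑σ)^[i] f) with hh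
  set p : Polynomial F := ∏ i ∈ Finset.range k, h i with hp
  -- p is invariant under σ
  have hmap : p.map (σ : F →+* F) = p := by
    have h1 : p.map (σ : F →+* F) = ∏ i ∈ Finset.range k, h (i + 1) := by
      rw [hp, Polynomial.map_prod]
      refine Finset.prod_congr rfl fun i _ => ?_
      simp [hh, Function.iterate_succ_apply']
    have hk0 : h k = h 0 := by simp [hh, hf]
    have h2 : (∏ i ∈ Finset.range k, h (i + 1)) * h 0
        = (∏ i ∈ Finset.range k, h i) * h 0 := by
      rw [← Finset.prod_range_succ', Finset.prod_range_succ, hk0]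
    have h0ne : h 0 ≠ 0 := by
      simpa [hh] using Polynomial.X_sub_C_ne_zero ((⇑σ)^[0] f)
    rw [h1, mul_right_cancel₀ h0ne h2, hp]
  -- coefficients of p are constants, so p lifts to a polynomial over K
  have hlift : p ∈ Polynomial.lifts ι := by
    rw [Polynomial.lifts_iff_coeff_lifts]
    intro n
    have : σ (p.coeff n) = p.coeff n := by
      conv_rhs => rw [← hmap]
      rw [Polynomial.coeff_map]; rfl
    obtain ⟨c, hc⟩ := hconst _ this
    exact ⟨c, hc.symm⟩
  obtain ⟨q, hq⟩ := (Polynomial.mem_lifts p).mp hlift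
  -- p is monic, hence q ≠ 0
  have hpmonic : p.Monic := Polynomial.monic_prod_of_monic _ _ fun i _ =>
    Polynomial.monic_X_sub_C _
  have hq0 : q ≠ 0 := by
    rintro rfl
    simp only [Polynomial.map_zero] at hq
    exact hpmonic.ne_zero hq.symm
  -- p(f) = 0
  have hpf : p.eval f = 0 := by
    rw [hp, Polynomial.eval_prod]
    refine Finset.prod_eq_zero (Finset.mem_range.mpr hk) ?_
    simp [hh]
  -- pick a representative of τ f
  obtain ⟨a, ha⟩ : ∃ a : ℕ → K, (↑a : Filter.Germ (Filter.atTop : Filter ℕ) K) = τ f :=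
    ⟨(τ f).out, (τ f).out_eq⟩
  -- push p(f) = 0 through τ
  have key : (↑(fun n => q.eval (a n)) : Filter.Germ (Filter.atTop : Filter ℕ) K) = 0 := by
    have h1 : τ (p.eval f) = 0 := by rw [hpf, map_zero]
    have h2 : τ (p.eval f) = Polynomial.eval₂ (τ.comp ι) (τ f) q := by
      rw [Polynomial.eval, Polynomial.hom_eval₂, ← hq, Polynomial.eval₂_map,
        RingHom.comp_id]
    have h3 : Polynomial.eval₂ (τ.comp ι) (τ f) q
        = (↑(fun n => q.eval (a n)) : Filter.Germ (Filter.atTop : Filter ℕ) K) := by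
      have hcoe : ∀ g : ℕ → K, (Filter.Germ.coeRingHom (Filter.atTop : Filter ℕ)) g = (↑g :
          Filter.Germ (Filter.atTop : Filter ℕ) K) := fun g => rfl
      have hC : (Filter.Germ.coeRingHom (Filter.atTop : Filter ℕ)).comp (Pi.constRingHom ℕ K)
          = τ.comp ι := by
        ext c
        simp only [RingHom.comp_apply, Pi.constRingHom_apply, hcoe, hconstmap]
        rfl
      calc Polynomial.eval₂ (τ.comp ι) (τ f) q
          = Polynomial.eval₂ ((Filter.Germ.coeRingHom (Filter.atTop : Filter ℕ)).comp
              (Pi.constRingHom ℕ K)) ((Filter.Germ.coeRingHom (Filter.atTop : Filter ℕ)) a) q := by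
            rw [hC, hcoe, ha]
        _ = (Filter.Germ.coeRingHom (Filter.atTop : Filter ℕ))
              (Polynomial.eval₂ (Pi.constRingHom ℕ K) a q) := by
            rw [Polynomial.hom_eval₂]
        _ = (↑(fun n => q.eval (a n)) : Filter.Germ (Filter.atTop : Filter ℕ) K) := by
            rw [hcoe]
            congr 1
            funext n
            have := Polynomial.hom_eval₂ q (Pi.constRingHom ℕ K) (Pi.evalRingHom (fun _ => K) n) a
            have h4 : (Polynomial.eval₂ (Pi.constRingHom ℕ K) a q) n
                = Polynomial.eval₂ ((Pi.evalRingHom (fun _ => K) n).comp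
                    (Pi.constRingHom ℕ K)) (a n) q := this
            rw [h4, Polynomial.eval]
            congr 1
    rw [← h1, h2, h3]
  -- hence eventually a n is a root of q
  have hev : ∀ᶠ n in Filter.atTop, q.eval (a n) = 0 := by
    have := Filter.Germ.coe_eq.mp (key.trans (rfl : (0 : Filter.Germ (Filter.atTop : Filter ℕ) K)
      = ↑(fun _ : ℕ => (0 : K))))
    exact this
  -- consider the finite set of roots of q in K
  set S : Finset K := q.roots.toFinset with hS
  set g : F := ∏ r ∈ S, (f - ι r) with hg
  have hτg : τ g = 0 := by
    have h1 : τ g = ∏ r ∈ S, (τ f - τ (ι r)) := by rw [hg, map_prod]; simp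
    have h2 : ∀ r : K, τ f - τ (ι r) = (↑(fun n => a n - r) : Filter.Germ (Filter.atTop : Filter ℕ) K) := by
      intro r
      rw [hconstmap, ← ha]
      rfl
    rw [h1]
    calc ∏ r ∈ S, (τ f - τ (ι r))
        = ∏ r ∈ S, (Filter.Germ.coeRingHom (Filter.atTop : Filter ℕ)) (fun n => a n - r) := by
          refine Finset.prod_congr rfl fun r _ => ?_
          rw [h2 r]; rfl
      _ = (Filter.Germ.coeRingHom (Filter.atTop : Filter ℕ)) (∏ r ∈ S, fun n => a n - r) := by
          rw [map_prod]
      _ = 0 := by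
          have : (↑(∏ r ∈ S, fun n => a n - r) : Filter.Germ (Filter.atTop : Filter ℕ) K)
              = (↑(fun _ : ℕ => (0 : K)) : Filter.Germ (Filter.atTop : Filter ℕ) K) := by
            rw [Filter.Germ.coe_eq]
            filter_upwards [hev] with n hn
            have hmem : a n ∈ S := by
              rw [hS, Multiset.mem_toFinset]
              exact (Polynomial.mem_roots hq0).mpr hn
            calc (∏ r ∈ S, fun m => a m - r) n = ∏ r ∈ S, (a n - r) := by
                  rw [Finset.prod_apply]
              _ = 0 := Finset.prod_eq_zero hmem (by simp)
          calc (Filter.Germ.coeRingHom (Filter.atTop : Filter ℕ)) (∏ r ∈ S, fun n => a n - r)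
              = (↑(fun _ : ℕ => (0 : K)) : Filter.Germ (Filter.atTop : Filter ℕ) K) := this
            _ = 0 := rfl
  have hg0 : g = 0 := hinj (by rw [hτg, map_zero])
  rw [hg, Finset.prod_eq_zero_iff] at hg0
  obtain ⟨r, -, hr⟩ := hg0
  have : f = ι r := sub_eq_zero.mp hr
  rw [this, hιc]
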